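/- arXiv:2210.11413 — 2 statements merged into one kernel-verified Lean document; each statement's English description precedes it below -/
import Mathlib

section
/- Let C ∈ {0,1}^{M×N}, y ∈ {0,1}^N, and define F(x) = −Σ_{m=1}^M (−1)^{C(m,:)·x} + (1/e)(1 + 1/N)^{Σ_n (y(n)−x(n))^2} for x ∈ {0,1}^N. Assume the all-zero vector satisfies all parity checks. Then every minimizer x* of F over {0,1}^N satisfies all parity checks (C x* ≡ 0 mod 2), and among all x satisfying the parity checks, x* minimizes Σ_n (y(n)−x(n))^2. -/
/-- The ML parity-check decoding objective
    `F(x) = -∑ₘ (-1)^{C(m,:)·x} + (1/e)(1+1/N)^{∑ₙ(yₙ-xₙ)²}`. -/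
noncomputable def F12 (M N : ℕ) (C : Fin M → Fin N → ℕ) (y : Fin N → ℕ)
    (x : Fin N → ℕ) : ℝ :=
  -(∑ m, (-1 : ℝ) ^ (∑ n, C m n * x n)) +
    (1 / Real.exp 1) *
      Real.rpow (1 + 1 / (N : ℝ)) (∑ n, ((y n : ℝ) - (x n : ℝ)) ^ 2)

/-- Every minimizer of `F` over binary vectors satisfies all parity checks, and
    among all binary vectors satisfying the parity checks it minimizes the
    squared distance to `y`. -/
theorem stmt_12 (M N : ℕ) (hN : 1 ≤ N) (C : Fin M → Fin N → ℕ)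
    (hC : ∀ m n, C m n ≤ 1) (y : Fin N → ℕ) (hy : ∀ n, y n ≤ 1)
    (h0 : ∀ m, (∑ n, C m n * 0) % 2 = 0)
    (xstar : Fin N → ℕ) (hxstar : ∀ n, xstar n ≤ 1)
    (hmin : ∀ x : Fin N → ℕ, (∀ n, x n ≤ 1) → F12 M N C y xstar ≤ F12 M N C y x) :
    (∀ m, (∑ n, C m n * xstar n) % 2 = 0) ∧
    (∀ x : Fin N → ℕ, (∀ n, x n ≤ 1) → (∀ m, (∑ n, C m n * x n) % 2 = 0) →
      ∑ n, ((y n : ℝ) - (xstar n : ℝ)) ^ 2 ≤ ∑ n, ((y n : ℝ) - (x n : ℝ)) ^ 2) := by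
  have hNpos : (0:ℝ) < N := by exact_mod_cast hN
  have hepos : (0:ℝ) < Real.exp 1 := Real.exp_pos 1
  set b : ℝ := 1 + 1/(N:ℝ) with hbdef
  have hb1 : 1 < b := by
    have : 0 < 1/(N:ℝ) := by positivity
    simp only [hbdef]; linarith
  have hb0 : 0 < b := by linarith
  -- squared distance
  set d : (Fin N → ℕ) → ℝ := fun x => ∑ n, ((y n : ℝ) - (x n : ℝ)) ^ 2 with hddef
  have hd0 : ∀ x : Fin N → ℕ, 0 ≤ d x := by
    intro x; apply Finset.sum_nonneg; intro n _; positivity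
  have hdN : ∀ x : Fin N → ℕ, (∀ n, x n ≤ 1) → d x ≤ N := by
    intro x hx
    calc d x ≤ ∑ _n : Fin N, (1:ℝ) := by
          apply Finset.sum_le_sum; intro n _
          rcases Nat.le_one_iff_eq_zero_or_eq_one.mp (hy n) with h1 | h1 <;>
            rcases Nat.le_one_iff_eq_zero_or_eq_one.mp (hx n) with h2 | h2 <;>
              simp [h1, h2] <;> norm_num
      _ = N := by simp
  -- (1+1/N)^N < e
  have hbN : b ^ N < Real.exp 1 := by
    have h1 : b < Real.exp (1/(N:ℝ)) := by
      have := Real.add_one_lt_exp (x := 1/(N:ℝ)) (by positivity)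
      simp only [hbdef]; linarith
    calc b ^ N < (Real.exp (1/(N:ℝ))) ^ N :=
          pow_lt_pow_left₀ h1 (le_of_lt hb0) (by omega)
      _ = Real.exp 1 := by
          rw [← Real.exp_nat_mul]
          congr 1
          field_simp
  -- second term bounds
  have hT_lt : ∀ x : Fin N → ℕ, (∀ n, x n ≤ 1) →
      (1 / Real.exp 1) * Real.rpow b (d x) < 1 := by
    intro x hx
    have h1 : Real.rpow b (d x) ≤ Real.rpow b (N:ℝ) :=
      Real.rpow_le_rpow_of_exponent_le (le_of_lt hb1) (hdN x hx)
    have h2 : Real.rpow b (N:ℝ) = b ^ N := Real.rpow_natCast b N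
    have h3 : Real.rpow b (d x) < Real.exp 1 := by rw [h2] at h1; linarith
    rw [div_mul_eq_mul_div, one_mul, div_lt_one hepos]
    exact h3
  have hT_ge : ∀ x : Fin N → ℕ,
      1 / Real.exp 1 ≤ (1 / Real.exp 1) * Real.rpow b (d x) := by
    intro x
    have h1 : (1:ℝ) ≤ Real.rpow b (d x) :=
      Real.one_le_rpow (le_of_lt hb1) (hd0 x)
    calc 1 / Real.exp 1 = (1 / Real.exp 1) * 1 := by ring
      _ ≤ (1 / Real.exp 1) * Real.rpow b (d x) :=
        mul_le_mul_of_nonneg_left h1 (by positivity)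
  -- sums of signs
  set S : (Fin N → ℕ) → ℝ := fun x => ∑ m, (-1 : ℝ) ^ (∑ n, C m n * x n) with hSdef
  have hterm_le : ∀ (k : ℕ), ((-1:ℝ)) ^ k ≤ 1 := by
    intro k
    rcases Nat.even_or_odd k with h | h
    · rw [h.neg_one_pow]
    · rw [h.neg_one_pow]; norm_num
  have hS_eq : ∀ x : Fin N → ℕ, (∀ m, (∑ n, C m n * x n) % 2 = 0) → S x = M := by
    intro x hpar
    have : S x = ∑ _m : Fin M, (1:ℝ) := by
      apply Finset.sum_congr rfl
      intro m _
      exact (Nat.even_iff.mpr (hpar m)).neg_one_pow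
    rw [this]; simp
  have hFeq : ∀ x : Fin N → ℕ, F12 M N C y x = -(S x) + (1/Real.exp 1) * Real.rpow b (d x) := by
    intro x; rfl
  -- Part 1
  have part1 : ∀ m, (∑ n, C m n * xstar n) % 2 = 0 := by
    by_contra hcon
    push_neg at hcon
    obtain ⟨m0, hm0⟩ := hcon
    have hodd : Odd (∑ n, C m0 n * xstar n) := by
      rw [Nat.odd_iff]; omega
    -- S xstar ≤ M - 2
    have hSle : S xstar ≤ (M:ℝ) - 2 := by
      have hsplit : S xstar = ∑ m ∈ Finset.univ.erase m0,
          (-1:ℝ) ^ (∑ n, C m n * xstar n) + (-1:ℝ) ^ (∑ n, C m0 n * xstar n) :=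
        (Finset.sum_erase_add _ _ (Finset.mem_univ m0)).symm
      have h1 : ∑ m ∈ Finset.univ.erase m0, (-1:ℝ) ^ (∑ n, C m n * xstar n)
          ≤ ((M:ℝ) - 1) := by
        calc ∑ m ∈ Finset.univ.erase m0, (-1:ℝ) ^ (∑ n, C m n * xstar n)
            ≤ ∑ _m ∈ Finset.univ.erase m0, (1:ℝ) := by
              apply Finset.sum_le_sum; intro m _; exact hterm_le _
          _ = ((Finset.univ.erase m0).card : ℝ) := by simp
          _ = (M:ℝ) - 1 := by
              rw [Finset.card_erase_of_mem (Finset.mem_univ m0)]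
              simp
              have : 1 ≤ M := Fin.pos m0
              push_cast [Nat.cast_sub this]
              ring
      have h2 : (-1:ℝ) ^ (∑ n, C m0 n * xstar n) = -1 := hodd.neg_one_pow
      rw [hsplit, h2]; linarith
    -- compare with x = 0
    have hz := hmin (fun _ => 0) (fun _ => Nat.zero_le 1)
    have hS0 : S (fun _ => 0) = M := hS_eq _ (by intro m; simp)
    have hF0 : F12 M N C y (fun _ => 0) < -(M:ℝ) + 1 := by
      rw [hFeq, hS0]
      have := hT_lt (fun _ => 0) (fun _ => Nat.zero_le 1)
      linarith
    have hFstar : -(M:ℝ) + 2 + 1/Real.exp 1 ≤ F12 M N C y xstar := by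
      rw [hFeq]
      have := hT_ge xstar
      linarith
    have hepos' : 0 < 1/Real.exp 1 := by positivity
    linarith
  refine ⟨part1, ?_⟩
  intro x hx hpar
  have h1 := hmin x hx
  rw [hFeq, hFeq, hS_eq xstar part1, hS_eq x hpar] at h1
  have h2 : Real.rpow b (d xstar) ≤ Real.rpow b (d x) := by
    have he' : 0 < 1/Real.exp 1 := by positivity
    nlinarith
  exact (Real.rpow_le_rpow_left_iff hb1).mp h2
end

section
/- Sign retrieval reduction: for A ∈ ℝ^{M×N} with A^T A invertible and y ∈ ℝ^M, min over s ∈ {±1}^M and x ∈ ℝ^N of ‖D(s)y − Ax‖² equals min over s ∈ {±1}^M of s^T Q s, where Q = D(y)(I − A(A^T A)^{-1}A^T)D(y) and D(v) is the diagonal matrix with diagonal v. The inner minimum over x is attained at x = (A^T A)^{-1} A^T D(y) s. -/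
open Matrix

section aux

variable {M N : ℕ} (A : Matrix (Fin M) (Fin N) ℝ)

lemma sum_sq_eq_dot (f : Fin M → ℝ) : ∑ m, f m ^ 2 = f ⬝ᵥ f := by
  simp [dotProduct, sq]

lemma dot_self_nonneg (f : Fin M → ℝ) : 0 ≤ f ⬝ᵥ f := by
  rw [← sum_sq_eq_dot]; positivity

lemma residual_orth (hA : IsUnit (Aᵀ * A).det) (v : Fin M → ℝ) :
    Aᵀ.mulVec (v - A.mulVec (((Aᵀ * A)⁻¹ * Aᵀ).mulVec v)) = 0 := by
  have h1 : (Aᵀ * A) * (Aᵀ * A)⁻¹ = 1 := Matrix.mul_nonsing_inv _ hA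
  have : Aᵀ.mulVec (A.mulVec (((Aᵀ * A)⁻¹ * Aᵀ).mulVec v)) = Aᵀ.mulVec v := by
    rw [mulVec_mulVec, mulVec_mulVec, ← Matrix.mul_assoc, h1, Matrix.one_mul]
  rw [mulVec_sub, this, sub_self]

lemma key_ineq (hA : IsUnit (Aᵀ * A).det) (v : Fin M → ℝ) (x : Fin N → ℝ) :
    ∑ m, (v m - A.mulVec (((Aᵀ * A)⁻¹ * Aᵀ).mulVec v) m) ^ 2 ≤
      ∑ m, (v m - A.mulVec x m) ^ 2 := by
  set xs := ((Aᵀ * A)⁻¹ * Aᵀ).mulVec v with hxs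
  set u := v - A.mulVec xs with hu
  set w := A.mulVec (xs - x) with hw
  have hvx : (fun m => v m - A.mulVec x m) = u + w := by
    funext m
    simp only [hu, hw, mulVec_sub, Pi.add_apply, Pi.sub_apply]
    ring
  have huw : u ⬝ᵥ w = 0 := by
    rw [hw, dotProduct_mulVec, ← mulVec_transpose, residual_orth A hA v]
    simp
  calc ∑ m, (v m - A.mulVec xs m) ^ 2 = u ⬝ᵥ u := by
        rw [← sum_sq_eq_dot]; rfl
    _ ≤ u ⬝ᵥ u + w ⬝ᵥ w := le_add_of_nonneg_right (dot_self_nonneg w)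
    _ = (u + w) ⬝ᵥ (u + w) := by
        have hwu : w ⬝ᵥ u = 0 := by rw [dotProduct_comm]; exact huw
        rw [add_dotProduct, dotProduct_add, dotProduct_add, huw, hwu]; ring
    _ = ∑ m, (v m - A.mulVec x m) ^ 2 := by
        rw [sum_sq_eq_dot, hvx]

lemma key_eq (hA : IsUnit (Aᵀ * A).det) (v : Fin M → ℝ) :
    ∑ m, (v m - A.mulVec (((Aᵀ * A)⁻¹ * Aᵀ).mulVec v) m) ^ 2 =
      v ⬝ᵥ ((1 - A * (Aᵀ * A)⁻¹ * Aᵀ).mulVec v) := by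
  set xs := ((Aᵀ * A)⁻¹ * Aᵀ).mulVec v with hxs
  set u := v - A.mulVec xs with hu
  have horth : Aᵀ.mulVec u = 0 := residual_orth A hA v
  have h1 : (A.mulVec xs) ⬝ᵥ u = 0 := by
    rw [dotProduct_comm, dotProduct_mulVec, ← mulVec_transpose, horth, zero_dotProduct]
  have h2 : u = (1 - A * (Aᵀ * A)⁻¹ * Aᵀ).mulVec v := by
    rw [hu, hxs, sub_mulVec, one_mulVec, mulVec_mulVec, ← Matrix.mul_assoc]
  have h3 : ∑ m, (v m - A.mulVec xs m) ^ 2 = u ⬝ᵥ u := by rw [sum_sq_eq_dot]; rfl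
  rw [h3]
  nth_rewrite 1 [hu]
  rw [sub_dotProduct, h1, sub_zero, h2]

lemma diag_swap (s y : Fin M → ℝ) : (diagonal s).mulVec y = (diagonal y).mulVec s := by
  funext m; simp [mulVec_diagonal, mul_comm]

lemma quad_eq (P : Matrix (Fin M) (Fin M) ℝ) (s y : Fin M → ℝ) :
    s ⬝ᵥ ((diagonal y * P * diagonal y).mulVec s) =
      ((diagonal y).mulVec s) ⬝ᵥ (P.mulVec ((diagonal y).mulVec s)) := by
  rw [← mulVec_mulVec, ← mulVec_mulVec, dotProduct_mulVec, ← mulVec_transpose,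
    diagonal_transpose]

end aux

/-- Sign retrieval reduction: minimizing `‖D(s)y - Ax‖²` over signs `s` and
    `x ∈ ℝᴺ` equals minimizing `sᵀ Q s` over signs, with
    `Q = D(y)(I - A(AᵀA)⁻¹Aᵀ)D(y)`; the inner minimum over `x` is attained at
    `x = (AᵀA)⁻¹ Aᵀ D(y) s`. -/
theorem stmt_16 (M N : ℕ) (A : Matrix (Fin M) (Fin N) ℝ)
    (hA : IsUnit (Aᵀ * A).det) (y : Fin M → ℝ) :
    sInf {v : ℝ | ∃ (s : Fin M → ℝ) (x : Fin N → ℝ),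
        (∀ m, s m = 1 ∨ s m = -1) ∧
        v = ∑ m, ((diagonal s).mulVec y m - A.mulVec x m) ^ 2} =
    sInf {v : ℝ | ∃ s : Fin M → ℝ, (∀ m, s m = 1 ∨ s m = -1) ∧
        v = s ⬝ᵥ ((diagonal y * (1 - A * (Aᵀ * A)⁻¹ * Aᵀ) * diagonal y).mulVec s)} ∧
    ∀ s : Fin M → ℝ, (∀ m, s m = 1 ∨ s m = -1) →
      ∀ x : Fin N → ℝ,
        ∑ m, ((diagonal s).mulVec y m -
            A.mulVec (((Aᵀ * A)⁻¹ * Aᵀ).mulVec ((diagonal y).mulVec s)) m) ^ 2 ≤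
          ∑ m, ((diagonal s).mulVec y m - A.mulVec x m) ^ 2 := by
  -- value of inner min for sign vector s
  have hval : ∀ s : Fin M → ℝ,
      s ⬝ᵥ ((diagonal y * (1 - A * (Aᵀ * A)⁻¹ * Aᵀ) * diagonal y).mulVec s) =
      ∑ m, ((diagonal s).mulVec y m -
          A.mulVec (((Aᵀ * A)⁻¹ * Aᵀ).mulVec ((diagonal y).mulVec s)) m) ^ 2 := by
    intro s
    rw [quad_eq, ← key_eq A hA ((diagonal y).mulVec s)]
    simp_rw [diag_swap s y]
  have hineq : ∀ (s : Fin M → ℝ) (x : Fin N → ℝ),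
      ∑ m, ((diagonal s).mulVec y m -
          A.mulVec (((Aᵀ * A)⁻¹ * Aᵀ).mulVec ((diagonal y).mulVec s)) m) ^ 2 ≤
        ∑ m, ((diagonal s).mulVec y m - A.mulVec x m) ^ 2 := by
    intro s x
    have := key_ineq A hA ((diagonal y).mulVec s) x
    simpa [diag_swap s y] using this
  refine ⟨?_, fun s _ x => hineq s x, ⟩
  set S1 := {v : ℝ | ∃ (s : Fin M → ℝ) (x : Fin N → ℝ),
      (∀ m, s m = 1 ∨ s m = -1) ∧
      v = ∑ m, ((diagonal s).mulVec y m - A.mulVec x m) ^ 2} with hS1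
  set S2 := {v : ℝ | ∃ s : Fin M → ℝ, (∀ m, s m = 1 ∨ s m = -1) ∧
      v = s ⬝ᵥ ((diagonal y * (1 - A * (Aᵀ * A)⁻¹ * Aᵀ) * diagonal y).mulVec s)} with hS2
  have hS1ne : S1.Nonempty := ⟨_, fun _ => 1, 0, fun m => Or.inl rfl, rfl⟩
  have hS2ne : S2.Nonempty := ⟨_, fun _ => 1, fun m => Or.inl rfl, rfl⟩
  have hS1bd : BddBelow S1 := ⟨0, by
    rintro v ⟨s, x, _, rfl⟩; positivity⟩
  have hS2bd : BddBelow S2 := ⟨0, by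
    rintro v ⟨s, _, rfl⟩; rw [hval s]; positivity⟩
  apply le_antisymm
  · apply le_csInf hS2ne
    rintro v ⟨s, hs, rfl⟩
    rw [hval s]
    exact csInf_le hS1bd ⟨s, _, hs, rfl⟩
  · apply le_csInf hS1ne
    rintro v ⟨s, x, hs, rfl⟩
    calc sInf S2 ≤ s ⬝ᵥ ((diagonal y * (1 - A * (Aᵀ * A)⁻¹ * Aᵀ) * diagonal y).mulVec s) :=
          csInf_le hS2bd ⟨s, hs, rfl⟩
      _ ≤ _ := by rw [hval s]; exact hineq s x
end
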